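/- For all noise levels 0 < σ₁ ≤ σ₂ and every threshold δ ≥ 0, the optimal opt-in utility satisfies U*(0, σ₁) ≥ U*(δ, σ₂); that is, a zero-threshold test with higher accuracy (smaller noise) yields at least as high an opt-in utility as any test with larger noise, so higher accuracy increases the audit's coverage. -/

import Mathlib

open ProbabilityTheory

/-- The cumulative distribution function of the standard normal distribution. -/
noncomputable def stdNormalCDF : ℝ → ℝ :=
  fun t => ProbabilityTheory.cdf (ProbabilityTheory.gaussianReal 0 1) t

/-- The test function `p(x; δ, σ) := 1 − Φ((δ − x)/σ)`. -/
noncomputable def testFn (δ σ x : ℝ) : ℝ := 1 - stdNormalCDF ((δ - x) / σ)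

/-- `G(x, δ, σ) := −c·x + p(x;δ,σ)·R/(1 − α + α·p(x;δ,σ))`. -/
noncomputable def Gfun (α c R δ σ x : ℝ) : ℝ :=
  -c * x + testFn δ σ x * R / (1 - α + α * testFn δ σ x)

/-- The optimal opt-in utility `U*(δ,σ) := sup_{x ≥ 0} G(x,δ,σ)`. -/
noncomputable def optIn (α c R δ σ : ℝ) : ℝ :=
  sSup ((fun x => Gfun α c R δ σ x) '' {x | 0 ≤ x})

lemma stdNormalCDF_mono : Monotone stdNormalCDF := fun _ _ h =>
  (ProbabilityTheory.cdf _).mono h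

lemma stdNormalCDF_nonneg (t : ℝ) : 0 ≤ stdNormalCDF t :=
  ProbabilityTheory.cdf_nonneg _ _

lemma stdNormalCDF_le_one (t : ℝ) : stdNormalCDF t ≤ 1 :=
  ProbabilityTheory.cdf_le_one _ _

lemma testFn_nonneg (δ σ x : ℝ) : 0 ≤ testFn δ σ x := by
  have := stdNormalCDF_le_one ((δ - x) / σ); unfold testFn; linarith

lemma testFn_le_one (δ σ x : ℝ) : testFn δ σ x ≤ 1 := by
  have := stdNormalCDF_nonneg ((δ - x) / σ); unfold testFn; linarith

lemma frac_mono (α R p q : ℝ) (hα0 : 0 < α) (hα1 : α < 1) (hR : 0 < R)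
    (hp : 0 ≤ p) (hpq : p ≤ q) :
    p * R / (1 - α + α * p) ≤ q * R / (1 - α + α * q) := by
  have hdp : 0 < 1 - α + α * p := by nlinarith
  have hdq : 0 < 1 - α + α * q := by nlinarith
  rw [div_le_div_iff₀ hdp hdq]
  nlinarith [mul_nonneg (mul_nonneg hR.le (by linarith : (0:ℝ) ≤ 1 - α)) (sub_nonneg.2 hpq)]

lemma Gfun_le (α c R δ σ x : ℝ) (hα0 : 0 < α) (hα1 : α < 1) (hc : 0 < c)
    (hR : 0 < R) (hx : 0 ≤ x) : Gfun α c R δ σ x ≤ R / (1 - α) := by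
  have h1 : 0 ≤ testFn δ σ x := testFn_nonneg δ σ x
  have h2 : testFn δ σ x ≤ 1 := testFn_le_one δ σ x
  have hd : 0 < 1 - α + α * testFn δ σ x := by nlinarith
  have : testFn δ σ x * R / (1 - α + α * testFn δ σ x) ≤ R / (1 - α) := by
    rw [div_le_div_iff₀ hd (by linarith)]
    nlinarith [mul_nonneg (mul_nonneg hR.le hα0.le) h1,
      mul_le_mul_of_nonneg_left h2 (mul_nonneg hR.le (by linarith : (0:ℝ) ≤ 1 - α))]
  unfold Gfun
  nlinarith

theorem optIn_zero_threshold_small_noise_ge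
    (α c R : ℝ) (hα0 : 0 < α) (hα1 : α < 1) (hc : 0 < c) (hR : 0 < R)
    (σ₁ σ₂ : ℝ) (hσ₁ : 0 < σ₁) (hσ : σ₁ ≤ σ₂)
    (δ : ℝ) (hδ : 0 ≤ δ) :
    optIn α c R δ σ₂ ≤ optIn α c R 0 σ₁ := by
  have hσ₂ : 0 < σ₂ := lt_of_lt_of_le hσ₁ hσ
  have hbdd : BddAbove ((fun x => Gfun α c R 0 σ₁ x) '' {x | 0 ≤ x}) := by
    refine ⟨R / (1 - α), ?_⟩
    rintro _ ⟨x, hx, rfl⟩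
    exact Gfun_le α c R 0 σ₁ x hα0 hα1 hc hR hx
  have hne : ((fun x => Gfun α c R δ σ₂ x) '' {x | 0 ≤ x}).Nonempty :=
    ⟨_, ⟨0, le_refl (0:ℝ), rfl⟩⟩
  refine csSup_le hne ?_
  rintro _ ⟨x, hx, rfl⟩
  have hx' : (0:ℝ) ≤ x := hx
  set y := x * σ₁ / σ₂ with hy
  have hy0 : 0 ≤ y := by positivity
  have hyx : y ≤ x := by
    rw [hy, div_le_iff₀ hσ₂]
    nlinarith [mul_le_mul_of_nonneg_left hσ hx']
  have hgle : Gfun α c R δ σ₂ x ≤ Gfun α c R 0 σ₁ y := by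
    have harg : (0 - y) / σ₁ = (0 - x) / σ₂ := by
      field_simp [hy]
      rw [hy, sub_mul, div_mul_cancel₀ _ hσ₂.ne']; ring
    have hmono : stdNormalCDF ((0 - y) / σ₁) ≤ stdNormalCDF ((δ - x) / σ₂) := by
      rw [harg]
      apply stdNormalCDF_mono
      gcongr
    have hp : testFn δ σ₂ x ≤ testFn 0 σ₁ y := by
      unfold testFn; linarith
    have hfrac := frac_mono α R (testFn δ σ₂ x) (testFn 0 σ₁ y) hα0 hα1 hR
      (testFn_nonneg δ σ₂ x) hp
    unfold Gfun
    nlinarith [mul_le_mul_of_nonneg_left hyx hc.le]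
  refine le_trans hgle (le_csSup hbdd ⟨y, hy0, rfl⟩)
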